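/- If X is discrete, i.e., its distribution P_X on ℝ^d is purely atomic with countable support, then the Ziv–Zakai bound without valley-filling vanishes: ZZ(P_X, P_{Y|X}, M) = 0 for every integer M ≥ 2 and every Markov kernel P_{Y|X}. -/

import Mathlib

open MeasureTheory ProbabilityTheory ENNReal

noncomputable section

variable {d : ℕ} {𝒴 : Type*} [MeasurableSpace 𝒴]

/-- Law of `X - u` when `X ∼ P`. -/
def shiftLaw (P : Measure (Fin d → ℝ)) (u : Fin d → ℝ) : Measure (Fin d → ℝ) :=
  P.map (· - u)

/-- The mixture measure `μ_U = ∑_k P_{X-u_k}`. -/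
def mixMeasure (P : Measure (Fin d → ℝ)) {M : ℕ} (U : Fin M → Fin d → ℝ) :
    Measure (Fin d → ℝ) :=
  ∑ k : Fin M, shiftLaw P (U k)

/-- The prior `p_i(x) = dP_{X-u_i}/dμ_U (x)`. -/
def prior (P : Measure (Fin d → ℝ)) {M : ℕ} (U : Fin M → Fin d → ℝ) (i : Fin M)
    (x : Fin d → ℝ) : ℝ≥0∞ :=
  (shiftLaw P (U i)).rnDeriv (mixMeasure P U) x

/-- Minimum Bayes error probability of the `M`-ary hypothesis test where hypothesis `i`
has prior `p_i(x)` and observation law `κ(·|x+u_i)`. -/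
def bayesError (P : Measure (Fin d → ℝ)) (κ : Kernel (Fin d → ℝ) 𝒴) {M : ℕ}
    (U : Fin M → Fin d → ℝ) (x : Fin d → ℝ) : ℝ≥0∞ :=
  ⨅ (φ : 𝒴 → Fin M) (_ : Measurable φ),
    ∑ i : Fin M, prior P U i x * κ (x + U i) {y | φ y ≠ i}

/-- `h(t,i,M)`. -/
def hFun (P : Measure (Fin d → ℝ)) (κ : Kernel (Fin d → ℝ) 𝒴) (M : ℕ) (t : ℝ)
    (i : Fin d) : ℝ≥0∞ :=
  ⨆ (U : Fin M → Fin d → ℝ) (_ : ∀ k : Fin M, U k i = (k : ℝ) * t),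
    ∫⁻ x, bayesError P κ U x ∂(mixMeasure P U)

/-- Ziv-Zakai bound without valley-filling. -/
def ZZ (P : Measure (Fin d → ℝ)) (κ : Kernel (Fin d → ℝ) 𝒴) (M : ℕ) : ℝ≥0∞ :=
  ∑ i : Fin d, ∫⁻ t in Set.Ioi (0 : ℝ),
    ENNReal.ofReal (t / 2) * (hFun P κ M t i / ((M : ℝ≥0∞) - 1))


/-- **The Ziv–Zakai bound without valley-filling vanishes for discrete inputs
(Proposition 3).** If `P_X` is purely atomic with countable support, then
`ZZ(P_X, P_{Y|X}, M) = 0` for every integer `M ≥ 2` and every Markov kernel. -/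
theorem ziv_zakai_discrete_eq_zero
    {d : ℕ} (hd : 1 ≤ d) {𝒴 : Type*} [MeasurableSpace 𝒴]
    (P : Measure (Fin d → ℝ)) [IsProbabilityMeasure P]
    (hcount : Set.Countable {x : Fin d → ℝ | P {x} ≠ 0})
    (hdisc : P {x : Fin d → ℝ | P {x} ≠ 0}ᶜ = 0)
    (κ : Kernel (Fin d → ℝ) 𝒴) [IsMarkovKernel κ]
    (M : ℕ) (hM : 2 ≤ M) :
    ZZ P κ M = 0 := by
  classical
  set A : Set (Fin d → ℝ) := {x | P {x} ≠ 0} with hA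
  unfold ZZ
  refine Finset.sum_eq_zero fun i _ => ?_
  -- the countable set of "bad" t's
  set B : Set ℝ := (fun p : (Fin d → ℝ) × (Fin d → ℝ) × ℤ => (p.1 i - p.2.1 i) / (p.2.2 : ℝ)) ''
    (A ×ˢ A ×ˢ Set.univ) with hB
  have hBcount : B.Countable :=
    ((hcount.prod (hcount.prod Set.countable_univ))).image _
  have hBzero : (volume : Measure ℝ) B = 0 := hBcount.measure_zero _
  have key : ∀ t : ℝ, 0 < t → t ∉ B → hFun P κ M t i = 0 := by
    intro t ht htB
    unfold hFun
    refine le_antisymm ?_ zero_le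
    refine iSup_le fun U => iSup_le fun hU => le_of_eq ?_
    -- supports of the shifted laws
    set S : Fin M → Set (Fin d → ℝ) := fun k => (fun x => x - U k) '' A with hS
    have hSm : ∀ k, MeasurableSet (S k) := fun k =>
      ((hcount.image _)).measurableSet
    have hmeas : ∀ k : Fin M, Measurable (fun x : Fin d → ℝ => x - U k) := fun k =>
      measurable_id.sub measurable_const
    haveI : ∀ k : Fin M, IsProbabilityMeasure (shiftLaw P (U k)) := fun k =>
      Measure.isProbabilityMeasure_map (hmeas k).aemeasurable
    have hshift0 : ∀ k, shiftLaw P (U k) (S k)ᶜ = 0 := by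
      intro k
      rw [shiftLaw, Measure.map_apply (hmeas k) (hSm k).compl,
        Set.preimage_compl, Set.preimage_image_eq A sub_left_injective]
      exact hdisc
    -- priors vanish off the supports, a.e.
    have hprior : ∀ k, ∀ᵐ x ∂(mixMeasure P U), x ∉ S k → prior P U k x = 0 := by
      intro k
      have hle : ∫⁻ x in (S k)ᶜ, (shiftLaw P (U k)).rnDeriv (mixMeasure P U) x
          ∂(mixMeasure P U) ≤ shiftLaw P (U k) (S k)ᶜ :=
        Measure.setLIntegral_rnDeriv_le _
      have h0 : ∫⁻ x in (S k)ᶜ, (shiftLaw P (U k)).rnDeriv (mixMeasure P U) x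
          ∂(mixMeasure P U) = 0 := le_antisymm (by rw [hshift0 k] at hle; exact hle) zero_le
      have := (lintegral_eq_zero_iff (Measure.measurable_rnDeriv _ _)).mp h0
      exact (ae_restrict_iff' (hSm k).compl).mp this
    -- disjointness of supports
    have hdisj : ∀ k k' : Fin M, k ≠ k' → ∀ x, x ∈ S k → x ∈ S k' → False := by
      intro k k' hkk' x ⟨a, ha, hax⟩ ⟨a', ha', hax'⟩
      apply htB
      refine ⟨(a, a', (k : ℤ) - (k' : ℤ)), ⟨ha, ha', trivial⟩, ?_⟩
      have hxx : a - U k = a' - U k' := hax.trans hax'.symm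
      have hai : a i - a' i = (k : ℝ) * t - (k' : ℝ) * t := by
        have := congrFun hxx i
        simp only [Pi.sub_apply] at this
        rw [hU k, hU k'] at this
        linarith
      have hne : ((k : ℝ) : ℝ) - ((k' : ℝ)) ≠ 0 := by
        have : (k : ℝ) ≠ (k' : ℝ) := by
          exact_mod_cast fun h => hkk' (Fin.ext (Nat.cast_injective h))
        intro h; exact this (by linarith)
      show (a i - a' i) / (((k : ℤ) - (k' : ℤ) : ℤ) : ℝ) = t
      rw [hai]
      push_cast
      field_simp
    -- bayes error vanishes a.e.
    have hbe : ∀ᵐ x ∂(mixMeasure P U), bayesError P κ U x = 0 := by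
      have hall : ∀ᵐ x ∂(mixMeasure P U), ∀ k, x ∉ S k → prior P U k x = 0 :=
        (ae_all_iff).mpr hprior
      filter_upwards [hall] with x hx
      refine le_antisymm ?_ zero_le
      by_cases hex : ∃ j, prior P U j x ≠ 0
      · obtain ⟨j, hj⟩ := hex
        have hjx : x ∈ S j := by by_contra h; exact hj (hx j h)
        have hothers : ∀ k, k ≠ j → prior P U k x = 0 := fun k hk => by
          refine hx k fun hxk => ?_
          exact absurd (hdisj k j hk x hxk hjx) (by simp)
        calc bayesError P κ U x
            ≤ ∑ i', prior P U i' x * κ (x + U i') {y | (fun _ : 𝒴 => j) y ≠ i'} :=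
              iInf₂_le (fun _ => j) measurable_const
          _ = 0 := by
              refine Finset.sum_eq_zero fun k _ => ?_
              by_cases hkj : k = j
              · subst hkj; simp
              · simp [hothers k (by exact fun h => hkj h)]
      · push_neg at hex
        have hj0 : (0 : ℕ) < M := by omega
        calc bayesError P κ U x
            ≤ ∑ i', prior P U i' x * κ (x + U i') {y | (fun _ : 𝒴 => (⟨0, hj0⟩ : Fin M)) y ≠ i'} :=
              iInf₂_le _ measurable_const
          _ = 0 := Finset.sum_eq_zero fun k _ => by simp [hex k]
    calc ∫⁻ x, bayesError P κ U x ∂(mixMeasure P U)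
        = ∫⁻ x, (0 : (Fin d → ℝ) → ℝ≥0∞) x ∂(mixMeasure P U) := lintegral_congr_ae hbe
      _ = 0 := by simp
  -- conclude: the integrand vanishes a.e. on Ioi 0
  have h0 : (fun t => ENNReal.ofReal (t / 2) * (hFun P κ M t i / ((M : ℝ≥0∞) - 1)))
      =ᵐ[(volume : Measure ℝ).restrict (Set.Ioi 0)] 0 := by
    rw [Filter.EventuallyEq, ae_restrict_iff' measurableSet_Ioi]
    filter_upwards [measure_eq_zero_iff_ae_notMem.mp hBzero] with t htB htpos
    simp [key t htpos htB]
  rw [lintegral_congr_ae h0]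
  simp
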